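/- Let Γ be a C³ hypersurface with unit normal n, and let w be a C³ vector field on Γ. Then ∇_Γ(Div_Γ w) = P Div_Γ(D_Γwᵀ) − D_Γn D_Γwᵀ n, where P = I − n⊗n. -/

import Mathlib

open scoped RealInnerProductSpace

/-- The rank-one operator `u ⊗ v`. -/
noncomputable def rankOne {V : Type*} [NormedAddCommGroup V] [InnerProductSpace ℝ V]
    (u v : V) : V →ₗ[ℝ] V where
  toFun w := ⟪v, w⟫ • u
  map_add' x y := by simp [inner_add_right, add_smul]
  map_smul' c x := by simp [inner_smul_right, mul_smul]

/-- The orthogonal projection `P = I - n ⊗ n` onto the tangent hyperplane. -/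
noncomputable def proj {V : Type*} [NormedAddCommGroup V] [InnerProductSpace ℝ V]
    (n : V) : V →ₗ[ℝ] V :=
  LinearMap.id - rankOne n n

section Aux

variable {V : Type*} [NormedAddCommGroup V] [InnerProductSpace ℝ V]

lemma trace_eq_sum_inner' {ι : Type*} [Fintype ι] [DecidableEq ι]
    [FiniteDimensional ℝ V]
    (b : OrthonormalBasis ι ℝ V) (T : V →ₗ[ℝ] V) :
    LinearMap.trace ℝ V T = ∑ i, ⟪b i, T (b i)⟫ := by
  rw [LinearMap.trace_eq_matrix_trace ℝ b.toBasis T, Matrix.trace]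
  congr 1
  ext i
  rw [Matrix.diag, LinearMap.toMatrix_apply, b.coe_toBasis, b.coe_toBasis_repr_apply,
    b.repr_apply_apply]

lemma proj_apply (n u : V) : proj n u = u - ⟪n, u⟫ • n := by
  simp [proj, rankOne]

lemma inner_proj_symm (n u v : V) : ⟪proj n u, v⟫ = ⟪u, proj n v⟫ := by
  simp only [proj_apply, inner_sub_left, inner_sub_right, real_inner_smul_left,
    real_inner_smul_right, real_inner_comm u n]
  ring

/-- main derivative lemma: derivative of `y ↦ Dw(y) (P(y) u)`. -/
lemma hasFDerivAt_main [CompleteSpace V] (w nf : V → V) (x : V) (B : V →L[ℝ] V →L[ℝ] V)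
    (Dn : V →L[ℝ] V) (hfdw : HasFDerivAt (fderiv ℝ w) B x) (hn : HasFDerivAt nf Dn x) (u : V) :
    HasFDerivAt (fun y => fderiv ℝ w y (proj (nf y) u))
      ((B.flip (proj (nf x) u) - ((innerSL ℝ u).comp Dn).smulRight (fderiv ℝ w x (nf x)))
        - ⟪nf x, u⟫ • ((fderiv ℝ w x).comp Dn)) x := by
  have h1 : HasFDerivAt (fun y => fderiv ℝ w y u)
      ((fderiv ℝ w x).comp (0 : V →L[ℝ] V) + B.flip u) x :=
    hfdw.clm_apply (hasFDerivAt_const u x)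
  have h2 : HasFDerivAt (fun y => ⟪nf y, u⟫)
      ((fderivInnerCLM ℝ (nf x, u)).comp (Dn.prod (0 : V →L[ℝ] V))) x :=
    hn.inner ℝ (hasFDerivAt_const u x)
  have h3 : HasFDerivAt (fun y => fderiv ℝ w y (nf y))
      ((fderiv ℝ w x).comp Dn + B.flip (nf x)) x := hfdw.clm_apply hn
  have h4 := h1.sub (h2.smul h3)
  have heq : (fun y => fderiv ℝ w y (proj (nf y) u))
      = fun y => fderiv ℝ w y u - ⟪nf y, u⟫ • fderiv ℝ w y (nf y) := by
    funext y; rw [proj_apply]; simp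
  rw [heq]
  convert h4 using 1
  · rfl
  ext v
  simp [fderivInnerCLM_apply, proj_apply, smul_smul, smul_sub, sub_smul, map_sub, map_smul,
    real_inner_comm u]
  abel

end Aux

set_option maxHeartbeats 2000000 in
/-- `∇_Γ(Div_Γ w) = P Div_Γ(D_Γwᵀ) - D_Γn D_Γwᵀ n`: for a C³ hypersurface realized
as a level set of a C³ function `b` with `|∇b| = 1` (so `n = ∇b`), and a C³ vector
field `w`, stated componentwise against every vector `e`, using
`D_Γw = Dw ∘ P`, `Div_Γ w = tr(D_Γw)`, and `(P Div_Γ(D_Γwᵀ))·e = Div_Γ(D_Γw (P e))`. -/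
theorem tangential_grad_tangential_div {N : ℕ}
    (b : EuclideanSpace ℝ (Fin N) → ℝ) (hb : ContDiff ℝ 3 b)
    (U : Set (EuclideanSpace ℝ (Fin N))) (hU : IsOpen U)
    (heik : ∀ y ∈ U, ‖gradient b y‖ = 1)
    (w : EuclideanSpace ℝ (Fin N) → EuclideanSpace ℝ (Fin N)) (hw : ContDiff ℝ 3 w)
    (x : EuclideanSpace ℝ (Fin N)) (hx : x ∈ U) :
    ∀ e, ⟪proj (gradient b x)
        (gradient (fun y => LinearMap.trace ℝ (EuclideanSpace ℝ (Fin N))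
          ((fderiv ℝ w y).toLinearMap ∘ₗ proj (gradient b y))) x), e⟫ =
      LinearMap.trace ℝ (EuclideanSpace ℝ (Fin N))
        ((fderiv ℝ (fun y => ((fderiv ℝ w y).toLinearMap ∘ₗ proj (gradient b y))
            (proj (gradient b x) e)) x).toLinearMap ∘ₗ proj (gradient b x)) -
      ⟪((fderiv ℝ (gradient b) x).toLinearMap ∘ₗ proj (gradient b x))
        (LinearMap.adjoint ((fderiv ℝ w x).toLinearMap ∘ₗ proj (gradient b x))
          (gradient b x)), e⟫ := by
  classical
  intro e
  -- basic differentiability facts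
  have hw2 : HasFDerivAt (fderiv ℝ w) (fderiv ℝ (fderiv ℝ w) x) x :=
    (((hw.fderiv_right (m := 2) (by norm_num)).differentiable (by norm_num)) x).hasFDerivAt
  set W := fderiv ℝ w x with hW_def
  set B := fderiv ℝ (fderiv ℝ w) x with hB_def
  have hBsym : ∀ u v : EuclideanSpace ℝ (Fin N), B u v = B v u := fun u v =>
    (hw.contDiffAt.isSymmSndFDerivAt (by norm_num)).eq u v
  -- the derivative of the gradient of b
  have hb2 : HasFDerivAt (fderiv ℝ b) (fderiv ℝ (fderiv ℝ b) x) x :=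
    (((hb.fderiv_right (m := 2) (by norm_num)).differentiable (by norm_num)) x).hasFDerivAt
  set ob := EuclideanSpace.basisFun (Fin N) ℝ with hob_def
  have hgrad_repr : gradient b = fun y => ∑ i, fderiv ℝ b y (ob i) • (ob i : EuclideanSpace ℝ (Fin N)) := by
    funext y
    rw [← ob.sum_repr (gradient b y)]
    congr 1; funext i
    rw [ob.repr_apply_apply, real_inner_comm]
    congr 1
    exact InnerProductSpace.toDual_symm_apply
  have hgrad0 : HasFDerivAt (gradient b)
      (∑ i, ((fderiv ℝ (fderiv ℝ b) x).flip (ob i)).smulRight (ob i : EuclideanSpace ℝ (Fin N))) x := by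
    rw [hgrad_repr]
    have h := HasFDerivAt.fun_sum (u := Finset.univ) (fun i _ =>
      ((hb2.clm_apply (hasFDerivAt_const (ob i : EuclideanSpace ℝ (Fin N)) x)).smul
        (hasFDerivAt_const (ob i : EuclideanSpace ℝ (Fin N)) x) :
        HasFDerivAt (fun y => fderiv ℝ b y (ob i) • (ob i : EuclideanSpace ℝ (Fin N))) _ x))
    refine h.congr_fderiv ?_
    ext v
    simp
  set Dn := fderiv ℝ (gradient b) x with hDn_def
  have hgrad : HasFDerivAt (gradient b) Dn x := by
    rw [hDn_def, hgrad0.fderiv]; exact hgrad0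
  have hDn_apply : ∀ u v : EuclideanSpace ℝ (Fin N), ⟪Dn u, v⟫ = fderiv ℝ (fderiv ℝ b) x u v := by
    intro u v
    rw [hDn_def, hgrad0.fderiv]
    have hv : ∑ i, ⟪(ob i : EuclideanSpace ℝ (Fin N)), v⟫ • (ob i : EuclideanSpace ℝ (Fin N)) = v := by
      simpa only [ob.repr_apply_apply] using ob.sum_repr v
    calc ⟪(∑ i, ((fderiv ℝ (fderiv ℝ b) x).flip (ob i)).smulRight
            (ob i : EuclideanSpace ℝ (Fin N))) u, v⟫
        = ∑ i, fderiv ℝ (fderiv ℝ b) x u (ob i) * ⟪(ob i : EuclideanSpace ℝ (Fin N)), v⟫ := by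
          simp [inner_smul_left, sum_inner]
      _ = fderiv ℝ (fderiv ℝ b) x u v := by
          conv_rhs => rw [← hv]
          rw [map_sum]
          congr 1; funext i
          rw [map_smul]
          simp [mul_comm]
  have hDnsym : ∀ u v : EuclideanSpace ℝ (Fin N), ⟪Dn u, v⟫ = ⟪u, Dn v⟫ := by
    intro u v
    rw [hDn_apply, real_inner_comm, hDn_apply]
    exact (hb.contDiffAt.isSymmSndFDerivAt (by norm_num)).eq u v
  set n := gradient b x with hn_def
  have hn1 : ⟪n, n⟫ = (1 : ℝ) := by
    rw [real_inner_self_eq_norm_mul_norm, heik x hx]; norm_num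
  -- eikonal consequence: Dn v ⟂ n
  have hDnn : ∀ v : EuclideanSpace ℝ (Fin N), ⟪Dn v, n⟫ = 0 := by
    have hq : HasFDerivAt (fun y => ⟪gradient b y, gradient b y⟫)
        ((fderivInnerCLM ℝ (gradient b x, gradient b x)).comp (Dn.prod Dn)) x :=
      hgrad.inner ℝ hgrad
    have hconst : fderiv ℝ (fun y => ⟪gradient b y, gradient b y⟫) x
        = fderiv ℝ (fun _ : EuclideanSpace ℝ (Fin N) => (1 : ℝ)) x := by
      apply Filter.EventuallyEq.fderiv_eq
      filter_upwards [hU.mem_nhds hx] with y hy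
      rw [real_inner_self_eq_norm_mul_norm, heik y hy]; norm_num
    have h0 := hq.fderiv
    rw [hconst, fderiv_fun_const] at h0
    intro v
    have h1 := congrFun (congrArg (DFunLike.coe) h0.symm) v
    simp only [fderivInnerCLM_apply, ContinuousLinearMap.comp_apply,
      ContinuousLinearMap.prod_apply, Pi.zero_apply, ContinuousLinearMap.zero_apply] at h1
    rw [real_inner_comm] at h1
    linarith [h1]
  have hDnnx : Dn n = 0 := by
    have h : ⟪Dn n, Dn n⟫ = 0 := by
      rw [hDnsym n (Dn n), real_inner_comm, hDnn]
    exact inner_self_eq_zero.mp h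
  have hnP : ∀ u : EuclideanSpace ℝ (Fin N), ⟪n, proj n u⟫ = 0 := by
    intro u
    rw [proj_apply, inner_sub_right, real_inner_smul_right, hn1]
    ring
  have hPP : ∀ u : EuclideanSpace ℝ (Fin N), proj n (proj n u) = proj n u := by
    intro u
    conv_lhs => rw [proj_apply (u := proj n u)]
    rw [hnP u]
    simp
  have hPDn : ∀ u : EuclideanSpace ℝ (Fin N), proj n (Dn u) = Dn u := by
    intro u
    rw [proj_apply, real_inner_comm, hDnn u]
    simp
  have hDnP : ∀ u : EuclideanSpace ℝ (Fin N), Dn (proj n u) = Dn u := by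
    intro u
    rw [proj_apply, map_sub, map_smul, hDnnx]
    simp
  -- the family of derivatives of `y ↦ Dw(y)(P(y)u)`
  have hF : ∀ u : EuclideanSpace ℝ (Fin N),
      HasFDerivAt (fun y => fderiv ℝ w y (proj (gradient b y) u))
        ((B.flip (proj n u) - ((innerSL ℝ u).comp Dn).smulRight (W n))
          - ⟪n, u⟫ • (W.comp Dn)) x :=
    fun u => hasFDerivAt_main w (gradient b) x B Dn hw2 hgrad u
  have hD_apply : ∀ u v : EuclideanSpace ℝ (Fin N),
      ((B.flip (proj n u) - ((innerSL ℝ u).comp Dn).smulRight (W n))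
          - ⟪n, u⟫ • (W.comp Dn)) v
        = B v (proj n u) - ⟪u, Dn v⟫ • (W n) - ⟪n, u⟫ • (W (Dn v)) := by
    intro u v
    simp [ContinuousLinearMap.sub_apply, ContinuousLinearMap.smul_apply,
      ContinuousLinearMap.smulRight_apply, ContinuousLinearMap.comp_apply,
      ContinuousLinearMap.flip_apply, innerSL_apply_apply]
  -- trace rewriting
  have htrace : ∀ (m : EuclideanSpace ℝ (Fin N))
      (T : EuclideanSpace ℝ (Fin N) →L[ℝ] EuclideanSpace ℝ (Fin N)),
      LinearMap.trace ℝ (EuclideanSpace ℝ (Fin N)) (T.toLinearMap ∘ₗ proj m)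
        = ∑ i, ⟪(ob i : EuclideanSpace ℝ (Fin N)), T (proj m (ob i))⟫ := by
    intro m T
    rw [trace_eq_sum_inner' ob]
    rfl
  have hf_eq : (fun y => LinearMap.trace ℝ (EuclideanSpace ℝ (Fin N))
        ((fderiv ℝ w y).toLinearMap ∘ₗ proj (gradient b y)))
      = fun y => ∑ i, ⟪(ob i : EuclideanSpace ℝ (Fin N)),
          fderiv ℝ w y (proj (gradient b y) (ob i))⟫ :=
    funext fun y => htrace _ _
  -- derivative of the tangential divergence
  have hfd : HasFDerivAt (fun y => ∑ i, ⟪(ob i : EuclideanSpace ℝ (Fin N)),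
        fderiv ℝ w y (proj (gradient b y) (ob i))⟫)
      (∑ i, (fderivInnerCLM ℝ ((ob i : EuclideanSpace ℝ (Fin N)),
          fderiv ℝ w x (proj (gradient b x) (ob i)))).comp
        ((0 : EuclideanSpace ℝ (Fin N) →L[ℝ] EuclideanSpace ℝ (Fin N)).prod
          ((B.flip (proj n (ob i)) - ((innerSL ℝ (ob i : EuclideanSpace ℝ (Fin N))).comp
            Dn).smulRight (W n)) - ⟪n, (ob i : EuclideanSpace ℝ (Fin N))⟫ • (W.comp Dn)))) x :=
    HasFDerivAt.fun_sum fun i _ => (hasFDerivAt_const _ _).inner ℝ (hF (ob i))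
  have hgradf : ∀ (g : EuclideanSpace ℝ (Fin N) → ℝ) (u : EuclideanSpace ℝ (Fin N)),
      ⟪gradient g x, u⟫ = fderiv ℝ g x u := fun g u => InnerProductSpace.toDual_symm_apply
  -- the second (adjoint) term
  have hterm2 : ⟪(Dn.toLinearMap ∘ₗ proj n)
      (LinearMap.adjoint (W.toLinearMap ∘ₗ proj n) n), e⟫ = ⟪n, W (Dn e)⟫ := by
    have h1 : (Dn.toLinearMap ∘ₗ proj n)
        (LinearMap.adjoint (W.toLinearMap ∘ₗ proj n) n)
        = Dn (proj n (LinearMap.adjoint (W.toLinearMap ∘ₗ proj n) n)) := rfl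
    rw [h1, hDnsym, inner_proj_symm, LinearMap.adjoint_inner_left]
    have h2 : (W.toLinearMap ∘ₗ proj n) (proj n (Dn e))
        = W (proj n (proj n (Dn e))) := rfl
    rw [h2, hPP, hPDn]
  -- the first term
  have hfd1 : fderiv ℝ (fun y => ((fderiv ℝ w y).toLinearMap ∘ₗ proj (gradient b y))
        (proj n e)) x
      = (B.flip (proj n (proj n e)) - ((innerSL ℝ (proj n e)).comp Dn).smulRight (W n))
          - ⟪n, proj n e⟫ • (W.comp Dn) := (hF (proj n e)).fderiv
  rw [hf_eq, inner_proj_symm, hgradf, hfd.fderiv, hfd1, htrace, hterm2]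
  have hsw : ∀ u : EuclideanSpace ℝ (Fin N), ⟪proj n e, Dn u⟫ = ⟪Dn e, u⟫ := by
    intro u
    rw [← hDnsym, hDnP]
  simp only [ContinuousLinearMap.sum_apply, ContinuousLinearMap.comp_apply,
    ContinuousLinearMap.prod_apply, ContinuousLinearMap.zero_apply, fderivInnerCLM_apply,
    inner_zero_left, add_zero, hD_apply, hPP, hDnP, hnP, zero_smul, sub_zero,
    ContinuousLinearMap.sub_apply, ContinuousLinearMap.smulRight_apply,
    ContinuousLinearMap.flip_apply, innerSL_apply_apply,
    inner_sub_right, inner_smul_right, hsw, hBsym (proj n e)]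
  rw [Finset.sum_sub_distrib, ob.sum_inner_mul_inner]
  congr 1
  refine Finset.sum_congr rfl fun i _ => ?_
  rw [real_inner_comm (Dn e) (ob i : EuclideanSpace ℝ (Fin N))]
  simp
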